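/- Let D₁, D₂ be positive definite diagonal matrices, a₁ ∈ ℝ^{n₁}, a₂ ∈ ℝ^{n₂}, qᵢ = aᵢᵀDᵢ⁻¹aᵢ > 0, and for a scalar θ define R_θ as the block matrix with diagonal blocks Dᵢ + aᵢaᵢᵀ and off-diagonal blocks θa₁a₂ᵀ and θa₂a₁ᵀ. If θ² < (1 + q₁⁻¹)(1 + q₂⁻¹) then R_θ is invertible with inverse D⁻¹ − (1/((1+q₁)(1+q₂) − θ²q₁q₂)) · [ (1+(1−θ²)q₂) b₁b₁ᵀ, θ b₁b₂ᵀ ; θ b₂b₁ᵀ, (1+(1−θ²)q₁) b₂b₂ᵀ ], where bᵢ = Dᵢ⁻¹aᵢ and D = D₁ ⊕ D₂. -/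

import Mathlib

open Matrix

lemma diag_mul_vmv {n m : ℕ} (d u : Fin n → ℝ) (v : Fin m → ℝ) :
    Matrix.diagonal d * vecMulVec u v = vecMulVec (fun i => d i * u i) v := by
  ext i j
  simp [mul_apply, vecMulVec_apply, diagonal, Finset.sum_ite_eq, mul_assoc]

lemma vmv_mul_diag {n m : ℕ} (u : Fin n → ℝ) (v d : Fin m → ℝ) :
    vecMulVec u v * Matrix.diagonal d = vecMulVec u (fun j => v j * d j) := by
  ext i j
  simp [mul_apply, vecMulVec_apply, diagonal, Finset.sum_ite_eq, mul_assoc]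

lemma vmv_mul_vmv {n m k : ℕ} (u : Fin n → ℝ) (v u' : Fin m → ℝ) (v' : Fin k → ℝ) :
    vecMulVec u v * vecMulVec u' v' = (∑ x, v x * u' x) • vecMulVec u v' := by
  ext i j
  simp only [mul_apply, vecMulVec_apply, Matrix.smul_apply, smul_eq_mul, Finset.sum_mul]
  exact Finset.sum_congr rfl fun x _ => by ring

/-- Explicit inverse of the two-block matrix
`R_θ = D + [a₁a₁ᵀ, θa₁a₂ᵀ; θa₂a₁ᵀ, a₂a₂ᵀ]` for `θ² < (1+q₁⁻¹)(1+q₂⁻¹)`. -/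
theorem stmt_11 (n₁ n₂ : ℕ) (d₁ : Fin n₁ → ℝ) (d₂ : Fin n₂ → ℝ)
    (hd₁ : ∀ j, 0 < d₁ j) (hd₂ : ∀ j, 0 < d₂ j)
    (a₁ : Fin n₁ → ℝ) (a₂ : Fin n₂ → ℝ)
    (q₁ q₂ : ℝ) (hq₁ : q₁ = ∑ j, a₁ j ^ 2 / d₁ j) (hq₂ : q₂ = ∑ j, a₂ j ^ 2 / d₂ j)
    (hq₁pos : 0 < q₁) (hq₂pos : 0 < q₂)
    (θ : ℝ) (hθ : θ ^ 2 < (1 + q₁⁻¹) * (1 + q₂⁻¹))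
    (b₁ : Fin n₁ → ℝ) (b₂ : Fin n₂ → ℝ)
    (hb₁ : ∀ j, b₁ j = a₁ j / d₁ j) (hb₂ : ∀ j, b₂ j = a₂ j / d₂ j)
    (Rθ X : Matrix (Fin n₁ ⊕ Fin n₂) (Fin n₁ ⊕ Fin n₂) ℝ)
    (hR : Rθ = Matrix.fromBlocks
      (Matrix.diagonal d₁ + Matrix.vecMulVec a₁ a₁) (θ • Matrix.vecMulVec a₁ a₂)
      (θ • Matrix.vecMulVec a₂ a₁) (Matrix.diagonal d₂ + Matrix.vecMulVec a₂ a₂))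
    (hX : X = Matrix.fromBlocks
        (Matrix.diagonal fun j => (d₁ j)⁻¹) 0 0 (Matrix.diagonal fun j => (d₂ j)⁻¹) -
      ((1 + q₁) * (1 + q₂) - θ ^ 2 * q₁ * q₂)⁻¹ • Matrix.fromBlocks
        ((1 + (1 - θ ^ 2) * q₂) • Matrix.vecMulVec b₁ b₁) (θ • Matrix.vecMulVec b₁ b₂)
        (θ • Matrix.vecMulVec b₂ b₁) ((1 + (1 - θ ^ 2) * q₁) • Matrix.vecMulVec b₂ b₂)) :
    Rθ * X = 1 ∧ X * Rθ = 1 := by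
  have hd₁' : ∀ j, d₁ j ≠ 0 := fun j => (hd₁ j).ne'
  have hd₂' : ∀ j, d₂ j ≠ 0 := fun j => (hd₂ j).ne'
  subst hR hX
  have hΔ : (1 + q₁) * (1 + q₂) - θ ^ 2 * q₁ * q₂ ≠ 0 := by
    have h1 : (1 + q₁⁻¹) * (1 + q₂⁻¹) * (q₁ * q₂) = (1 + q₁) * (1 + q₂) := by
      field_simp; ring
    have h2 : θ ^ 2 * (q₁ * q₂) < (1 + q₁⁻¹) * (1 + q₂⁻¹) * (q₁ * q₂) :=
      (mul_lt_mul_iff_of_pos_right (mul_pos hq₁pos hq₂pos)).mpr hθ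
    rw [h1] at h2
    nlinarith
  have hs₁ : ∑ x, a₁ x * b₁ x = q₁ := by
    rw [hq₁]; exact Finset.sum_congr rfl fun x _ => by rw [hb₁]; ring
  have hs₂ : ∑ x, a₂ x * b₂ x = q₂ := by
    rw [hq₂]; exact Finset.sum_congr rfl fun x _ => by rw [hb₂]; ring
  have hdb₁ : (fun i => d₁ i * b₁ i) = a₁ := funext fun i => by
    rw [hb₁, ← mul_div_assoc]; exact mul_div_cancel_left₀ _ (hd₁' i)
  have hdb₂ : (fun i => d₂ i * b₂ i) = a₂ := funext fun i => by
    rw [hb₂, ← mul_div_assoc]; exact mul_div_cancel_left₀ _ (hd₂' i)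
  have hs₁' : ∑ x, b₁ x * a₁ x = q₁ := by
    rw [← hs₁]; exact Finset.sum_congr rfl fun x _ => mul_comm _ _
  have hs₂' : ∑ x, b₂ x * a₂ x = q₂ := by
    rw [← hs₂]; exact Finset.sum_congr rfl fun x _ => mul_comm _ _
  have hba₁ : (fun i => (d₁ i)⁻¹ * a₁ i) = b₁ := funext fun i => by
    rw [hb₁, div_eq_mul_inv, mul_comm]
  have hba₂ : (fun i => (d₂ i)⁻¹ * a₂ i) = b₂ := funext fun i => by
    rw [hb₂, div_eq_mul_inv, mul_comm]
  have hbd₁ : (fun j => b₁ j * d₁ j) = a₁ := funext fun j => by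
    rw [hb₁, div_mul_cancel₀ _ (hd₁' j)]
  have hbd₂ : (fun j => b₂ j * d₂ j) = a₂ := funext fun j => by
    rw [hb₂, div_mul_cancel₀ _ (hd₂' j)]
  have hab₁ : (fun j => a₁ j * (d₁ j)⁻¹) = b₁ := funext fun j => by
    rw [hb₁, div_eq_mul_inv]
  have hab₂ : (fun j => a₂ j * (d₂ j)⁻¹) = b₂ := funext fun j => by
    rw [hb₂, div_eq_mul_inv]
  have hdd₁ : Matrix.diagonal d₁ * Matrix.diagonal (fun j => (d₁ j)⁻¹) = 1 := by
    rw [diagonal_mul_diagonal]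
    convert diagonal_one using 2
    exact funext fun j => mul_inv_cancel₀ (hd₁' j)
  have hdd₂ : Matrix.diagonal d₂ * Matrix.diagonal (fun j => (d₂ j)⁻¹) = 1 := by
    rw [diagonal_mul_diagonal]
    convert diagonal_one using 2
    exact funext fun j => mul_inv_cancel₀ (hd₂' j)
  have hdd₁' : Matrix.diagonal (fun j => (d₁ j)⁻¹) * Matrix.diagonal d₁ = 1 := by
    rw [diagonal_mul_diagonal]
    convert diagonal_one using 2
    exact funext fun j => inv_mul_cancel₀ (hd₁' j)
  have hdd₂' : Matrix.diagonal (fun j => (d₂ j)⁻¹) * Matrix.diagonal d₂ = 1 := by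
    rw [diagonal_mul_diagonal]
    convert diagonal_one using 2
    exact funext fun j => inv_mul_cancel₀ (hd₂' j)
  generalize hs : ((1 + q₁) * (1 + q₂) - θ ^ 2 * q₁ * q₂)⁻¹ = s
  have hst : s * ((1 + q₁) * (1 + q₂) - θ ^ 2 * q₁ * q₂) = 1 := hs ▸ inv_mul_cancel₀ hΔ
  rw [sub_eq_add_neg, fromBlocks_smul, fromBlocks_neg, fromBlocks_add]
  constructor
  · rw [fromBlocks_multiply, ← fromBlocks_one, fromBlocks_inj]
    refine ⟨?_, ?_, ?_, ?_⟩ <;>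
    · simp only [mul_add, add_mul, Matrix.add_mul, Matrix.mul_add, Matrix.mul_smul, Matrix.smul_mul, mul_neg, neg_mul,
        mul_zero, zero_mul, mul_one, one_mul, smul_smul, smul_add, smul_neg, neg_smul,
        Matrix.mul_neg, Matrix.neg_mul, neg_neg,
        diag_mul_vmv, vmv_mul_diag, vmv_mul_vmv, hdd₁, hdd₂, hdb₁, hdb₂, hab₁, hab₂,
        hs₁, hs₂, hs₁', hs₂', hba₁, hba₂, hbd₁, hbd₂, add_zero, zero_add]
      match_scalars <;>
        first
          | ring1
          | linear_combination -hst
          | linear_combination hst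
          | linear_combination -(θ * hst)
          | linear_combination θ * hst
  · rw [fromBlocks_multiply, ← fromBlocks_one, fromBlocks_inj]
    refine ⟨?_, ?_, ?_, ?_⟩ <;>
    · simp only [mul_add, add_mul, Matrix.add_mul, Matrix.mul_add, Matrix.mul_smul, Matrix.smul_mul, mul_neg, neg_mul,
        mul_zero, zero_mul, mul_one, one_mul, smul_smul, smul_add, smul_neg, neg_smul,
        Matrix.mul_neg, Matrix.neg_mul, neg_neg,
        diag_mul_vmv, vmv_mul_diag, vmv_mul_vmv, hdd₁', hdd₂', hdb₁, hdb₂, hab₁, hab₂,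
        hs₁, hs₂, hs₁', hs₂', hba₁, hba₂, hbd₁, hbd₂, add_zero, zero_add]
      match_scalars <;>
        first
          | ring1
          | linear_combination -hst
          | linear_combination hst
          | linear_combination -(θ * hst)
          | linear_combination θ * hst
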